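/- arXiv:1608.07390 — 2 statements merged into one kernel-verified Lean document; each statement's English description precedes it below -/
import Mathlib

section
/- Let G and H be non-trivial graphs where G has a universal vertex and H is not complete. Then tn(G ∘ H) ≤ 4. -/
open SimpleGraph

/-- A walk `W` between `u` and `v` is a *tolled walk* if either `u = v` and `W` is trivial,
or `u` and `v` are adjacent and `W` is the single-edge walk, or `u ≠ v` are non-adjacent,
`W` has at least one interior vertex, `u` is adjacent exactly to the interior vertex
at position 1 and `v` exactly to the interior vertex at position `W.length - 1`. -/
def IsTolledWalk {V : Type*} (G : SimpleGraph V) {u v : V} (W : G.Walk u v) : Prop :=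
  (u = v ∧ W.length = 0) ∨
  (G.Adj u v ∧ W.support = [u, v]) ∨
  (¬ G.Adj u v ∧ u ≠ v ∧ 2 ≤ W.length ∧
    (∀ i, 0 < i → i < W.length → (G.Adj u (W.support.getD i u) ↔ i = 1)) ∧
    (∀ i, 0 < i → i < W.length → (G.Adj v (W.support.getD i u) ↔ i = W.length - 1)))

/-- The toll interval between `u` and `v`: vertices lying on some tolled walk. -/
def tollInterval {V : Type*} (G : SimpleGraph V) (u v : V) : Set V :=
  {x | ∃ W : G.Walk u v, IsTolledWalk G W ∧ x ∈ W.support}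

/-- A toll set: the toll intervals between its pairs cover the vertex set. -/
def IsTollSet {V : Type*} (G : SimpleGraph V) (S : Set V) : Prop :=
  ∀ x : V, ∃ u ∈ S, ∃ v ∈ S, x ∈ tollInterval G u v

/-- The toll number: minimum size of a toll set. -/
noncomputable def tollNumber {V : Type*} (G : SimpleGraph V) : ℕ :=
  sInf {n | ∃ S : Set V, S.Finite ∧ S.ncard = n ∧ IsTollSet G S}

/-- `v` is a cut vertex if deleting it disconnects the graph. -/
def IsCutVertex {V : Type*} (G : SimpleGraph V) (v : V) : Prop :=
  ¬ (G.induce {w | w ≠ v}).Preconnected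

/-- The extreme vertices of `G` with respect to toll convexity. -/
def extremeVertices {V : Type*} (G : SimpleGraph V) : Set V :=
  {s | ∀ x y : V, x ≠ s → y ≠ s → s ∉ tollInterval G x y}

/-- The lexicographic product of simple graphs. -/
def lexProd {V W : Type*} (G : SimpleGraph V) (H : SimpleGraph W) : SimpleGraph (V × W) where
  Adj a b := G.Adj a.1 b.1 ∨ (a.1 = b.1 ∧ H.Adj a.2 b.2)
  symm := by
    constructor
    rintro a b (h | ⟨h1, h2⟩)
    · exact Or.inl h.symm
    · exact Or.inr ⟨h1.symm, h2.symm⟩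
  loopless := by
    constructor
    rintro a (h | ⟨_, h⟩)
    · exact G.ne_of_adj h rfl
    · exact H.ne_of_adj h rfl

lemma mem_toll_aux {V W : Type*} (G : SimpleGraph V) (H : SimpleGraph W)
    {c : V} {h1 h2 : W} (hne : h1 ≠ h2) (hnadj : ¬ H.Adj h1 h2)
    (x : V × W) (hx : G.Adj x.1 c) :
    x ∈ tollInterval (lexProd G H) (c, h1) (c, h2) := by
  have hadj1 : (lexProd G H).Adj (c, h1) x := Or.inl hx.symm
  have hadj2 : (lexProd G H).Adj x (c, h2) := Or.inl hx
  refine ⟨Walk.cons hadj1 (Walk.cons hadj2 Walk.nil), ?_, ?_⟩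
  · right; right
    have hna : ¬ (lexProd G H).Adj (c, h1) (c, h2) := by
      rintro (h | ⟨_, h⟩)
      · exact G.ne_of_adj h rfl
      · exact hnadj h
    refine ⟨hna, by simp [hne], by simp, ?_, ?_⟩
    · intro i hi hi'
      simp only [Walk.length_cons, Walk.length_nil] at hi'
      have : i = 1 := by omega
      subst this
      simpa using hadj1
    · intro i hi hi'
      simp only [Walk.length_cons, Walk.length_nil] at hi'
      have : i = 1 := by omega
      subst this
      simpa using hadj2.symm
  · simp

theorem stmt11 {V W : Type*} [Fintype V] [Fintype W] [Nontrivial V] [Nontrivial W]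
    (G : SimpleGraph V) (H : SimpleGraph W)
    (huniv : ∃ g : V, ∀ w : V, w ≠ g → G.Adj g w) (hH : H ≠ ⊤) :
    tollNumber (lexProd G H) ≤ 4 := by
  obtain ⟨g, hg⟩ := huniv
  obtain ⟨g', hg'⟩ := exists_ne g
  have hHlt : H < ⊤ := lt_of_le_of_ne le_top hH
  have : ∃ a b : W, a ≠ b ∧ ¬ H.Adj a b := by
    by_contra hcon
    push_neg at hcon
    apply hH
    ext a b
    simp only [SimpleGraph.top_adj]
    exact ⟨fun h => h.ne, fun h => hcon a b h⟩
  obtain ⟨h1, h2, hne, hnadj⟩ := this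
  set S : Set (V × W) := {(g, h1), (g, h2), (g', h1), (g', h2)} with hS
  have hfin : S.Finite := Set.toFinite _
  have hcard : S.ncard ≤ 4 := by
    calc S.ncard ≤ ({(g, h2), (g', h1), (g', h2)} : Set (V × W)).ncard + 1 :=
          Set.ncard_insert_le _ _
      _ ≤ (({(g', h1), (g', h2)} : Set (V × W)).ncard + 1) + 1 := by
          gcongr; exact Set.ncard_insert_le _ _
      _ ≤ ((({(g', h2)} : Set (V × W)).ncard + 1) + 1) + 1 :=
          Nat.add_le_add_right (Nat.add_le_add_right (Set.ncard_insert_le _ _) 1) 1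
      _ ≤ 4 := by simp
  have hts : IsTollSet (lexProd G H) S := by
    intro x
    by_cases hx : x.1 = g
    · refine ⟨(g', h1), by simp [hS], (g', h2), by simp [hS], ?_⟩
      exact mem_toll_aux G H hne hnadj x (by rw [hx]; exact hg g' hg')
    · refine ⟨(g, h1), by simp [hS], (g, h2), by simp [hS], ?_⟩
      exact mem_toll_aux G H hne hnadj x ((hg x.1 hx).symm)
  calc tollNumber (lexProd G H) ≤ S.ncard := Nat.sInf_le ⟨S, hfin, rfl, hts⟩
    _ ≤ 4 := hcard
end

section
/- Let G and H be connected non-trivial graphs with H not complete. If tn(G ∘ H) = 3 · tn(G), then tn(H) > 2. -/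
open SimpleGraph

section Aux

variable {V W : Type*} {G : SimpleGraph V} {H : SimpleGraph W}

lemma lex_adj {a b : V × W} :
    (lexProd G H).Adj a b ↔ G.Adj a.1 b.1 ∨ (a.1 = b.1 ∧ H.Adj a.2 b.2) := Iff.rfl

lemma getD_support_map {V' : Type*} {G' : SimpleGraph V'} (φ : G →g G') {u v : V}
    (Wk : G.Walk u v) (i : ℕ) (hi : i ≤ Wk.length) (d : V) (d' : V') :
    ((Wk.map φ).support.getD i d') = φ (Wk.support.getD i d) := by
  have h1 : i < Wk.support.length := by rw [SimpleGraph.Walk.length_support]; omega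
  have h2 : i < (Wk.map φ).support.length := by
    rw [SimpleGraph.Walk.length_support, SimpleGraph.Walk.length_map]; omega
  rw [List.getD_eq_getElem _ _ h2, List.getD_eq_getElem _ _ h1]
  simp [SimpleGraph.Walk.support_map]

/-- the embedding of a layer `{g} × H` into the lexicographic product -/
def layerHom (G : SimpleGraph V) (H : SimpleGraph W) (g : V) : H →g lexProd G H where
  toFun h := (g, h)
  map_rel' := fun hab => Or.inr ⟨rfl, hab⟩

@[simp] lemma layerHom_apply (g : V) (a : W) : layerHom G H g a = (g, a) := rfl

lemma layer_tolled (g : V) {x y : W} {Wh : H.Walk x y} (hW : IsTolledWalk H Wh) :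
    IsTolledWalk (lexProd G H) (Wh.map (layerHom G H g)) := by
  rcases hW with ⟨hxy, hl⟩ | ⟨hadj, hsup⟩ | ⟨hnadj, hne, hlen, h1, h2⟩
  · exact Or.inl ⟨by simp [layerHom, hxy], (SimpleGraph.Walk.length_map _ _).trans hl⟩
  · refine Or.inr (Or.inl ⟨Or.inr ⟨rfl, hadj⟩, ?_⟩)
    rw [SimpleGraph.Walk.support_map, hsup]; rfl
  · refine Or.inr (Or.inr ⟨?_, ?_, ?_, ?_, ?_⟩)
    · rintro (h | ⟨-, h⟩)
      · exact G.irrefl h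
      · exact hnadj h
    · exact fun h' => hne (congrArg Prod.snd h')
    · rw [SimpleGraph.Walk.length_map]; exact hlen
    · intro i hi0 hil
      rw [SimpleGraph.Walk.length_map] at hil
      rw [getD_support_map _ _ i (le_of_lt hil) x]
      constructor
      · rintro (h | ⟨-, h⟩)
        · exact absurd h (G.irrefl)
        · exact (h1 i hi0 hil).mp h
      · intro h; exact Or.inr ⟨rfl, (h1 i hi0 hil).mpr h⟩
    · intro i hi0 hil
      rw [SimpleGraph.Walk.length_map] at hil
      rw [getD_support_map _ _ i (le_of_lt hil) x]
      rw [SimpleGraph.Walk.length_map]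
      constructor
      · rintro (h | ⟨-, h⟩)
        · exact absurd h (G.irrefl)
        · exact (h2 i hi0 hil).mp h
      · intro h; exact Or.inr ⟨rfl, (h2 i hi0 hil).mpr h⟩

/-- lifting `G` into the product, choosing a second coordinate for every vertex -/
def colorHom (G : SimpleGraph V) (H : SimpleGraph W) (c : V → W) : G →g lexProd G H where
  toFun w := (w, c w)
  map_rel' := fun hab => Or.inl hab

@[simp] lemma colorHom_apply (c : V → W) (a : V) : colorHom G H c a = (a, c a) := rfl

lemma color_tolled {u v : V} {Wg : G.Walk u v} (c : V → W)
    (hnadj : ¬ G.Adj u v) (hne : u ≠ v) (hlen : 2 ≤ Wg.length)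
    (h1 : ∀ i, 0 < i → i < Wg.length → (G.Adj u (Wg.support.getD i u) ↔ i = 1))
    (h2 : ∀ i, 0 < i → i < Wg.length → (G.Adj v (Wg.support.getD i u) ↔ i = Wg.length - 1)) :
    IsTolledWalk (lexProd G H) (Wg.map (colorHom G H c)) := by
  refine Or.inr (Or.inr ⟨?_, ?_, ?_, ?_, ?_⟩)
  · rintro (h | ⟨h, -⟩)
    · exact hnadj h
    · exact hne h
  · exact fun h' => hne (congrArg Prod.fst h')
  · rw [SimpleGraph.Walk.length_map]; exact hlen
  · intro i hi0 hil
    rw [SimpleGraph.Walk.length_map] at hil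
    rw [getD_support_map _ _ i (le_of_lt hil) u]
    simp only [colorHom_apply, lex_adj]
    constructor
    · rintro (h | ⟨h, hadj⟩)
      · exact (h1 i hi0 hil).mp h
      · exfalso
        have : c u = c (Wg.support.getD i u) := congrArg c h
        rw [← this] at hadj
        exact H.irrefl hadj
    · intro h; exact Or.inl ((h1 i hi0 hil).mpr h)
  · intro i hi0 hil
    rw [SimpleGraph.Walk.length_map] at hil
    rw [getD_support_map _ _ i (le_of_lt hil) u]
    rw [SimpleGraph.Walk.length_map]
    simp only [colorHom_apply, lex_adj]
    constructor
    · rintro (h | ⟨h, hadj⟩)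
      · exact (h2 i hi0 hil).mp h
      · exfalso
        have : c v = c (Wg.support.getD i u) := congrArg c h
        rw [← this] at hadj
        exact H.irrefl hadj
    · intro h; exact Or.inl ((h2 i hi0 hil).mpr h)

lemma univ_isTollSet : IsTollSet G (Set.univ : Set V) := by
  intro x
  exact ⟨x, Set.mem_univ x, x, Set.mem_univ x,
    SimpleGraph.Walk.nil, Or.inl ⟨rfl, rfl⟩, by simp⟩

lemma tollNumber_mem (G : SimpleGraph V) [Fintype V] :
    ∃ S : Set V, S.Finite ∧ S.ncard = tollNumber G ∧ IsTollSet G S := by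
  have hne : {n | ∃ S : Set V, S.Finite ∧ S.ncard = n ∧ IsTollSet G S}.Nonempty :=
    ⟨(Set.univ : Set V).ncard, Set.univ, Set.finite_univ, rfl, univ_isTollSet⟩
  exact Nat.sInf_mem hne

end Aux


theorem stmt17 {V W : Type*} [Fintype V] [Fintype W] [Nontrivial V] [Nontrivial W]
    (G : SimpleGraph V) (H : SimpleGraph W)
    (hGc : G.Connected) (hHc : H.Connected) (hH : H ≠ ⊤)
    (heq : tollNumber (lexProd G H) = 3 * tollNumber G) :
    2 < tollNumber H := by
  by_contra hcon
  push_neg at hcon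
  obtain ⟨SG, hSGfin, hSGcard, hSGtoll⟩ := tollNumber_mem G
  obtain ⟨T, hTfin, hTcard, hTtoll⟩ := tollNumber_mem H
  have hVne : Nonempty V := inferInstance
  have hWne : Nonempty W := inferInstance
  obtain ⟨v0⟩ := hVne
  obtain ⟨w0⟩ := hWne
  have hSGne : SG.Nonempty := by
    obtain ⟨u, hu, -⟩ := hSGtoll v0
    exact ⟨u, hu⟩
  have hG1 : 1 ≤ tollNumber G := by
    rw [← hSGcard]
    exact (Set.ncard_pos hSGfin).mpr hSGne
  obtain ⟨x0, hx0, -⟩ := hTtoll w0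
  have hprod : IsTollSet (lexProd G H) (SG ×ˢ T) := by
    rintro ⟨g, h⟩
    by_cases hg : g ∈ SG
    · obtain ⟨x, hx, y, hy, Wh, hWh, hmem⟩ := hTtoll h
      refine ⟨(g, x), Set.mk_mem_prod hg hx, (g, y), Set.mk_mem_prod hg hy,
        Wh.map (layerHom G H g), layer_tolled g hWh, ?_⟩
      refine (congrArg (fun l => (g, h) ∈ l) (SimpleGraph.Walk.support_map (layerHom G H g) Wh)).mpr ?_
      exact List.mem_map.mpr ⟨h, hmem, rfl⟩
    · obtain ⟨u, hu, v, hv, Wg, hWg, hmem⟩ := hSGtoll g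
      have hgu : g ≠ u := fun h' => hg (h' ▸ hu)
      have hgv : g ≠ v := fun h' => hg (h' ▸ hv)
      rcases hWg with ⟨huv, hl⟩ | ⟨hadj, hsup⟩ | ⟨hnadj, hne, hlen, h1, h2⟩
      · exfalso
        subst huv
        have : Wg = SimpleGraph.Walk.nil :=
          (SimpleGraph.Walk.nil_iff_length_eq.mpr hl).eq_nil
        rw [this] at hmem
        exact hgu (SimpleGraph.Walk.mem_support_nil_iff.mp hmem)
      · exfalso
        rw [hsup] at hmem
        simp only [List.mem_cons, List.mem_singleton, List.not_mem_nil, or_false] at hmem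
        rcases hmem with h' | h'
        · exact hgu h'
        · exact hgv h'
      · classical
        let c : V → W := fun w => if w = g then h else x0
        have hcu : c u = x0 := if_neg (Ne.symm hgu)
        have hcv : c v = x0 := if_neg (Ne.symm hgv)
        have hcg : c g = h := if_pos rfl
        refine ⟨(u, c u), Set.mk_mem_prod hu (by rw [hcu]; exact hx0),
          (v, c v), Set.mk_mem_prod hv (by rw [hcv]; exact hx0),
          Wg.map (colorHom G H c), color_tolled c hnadj hne hlen h1 h2, ?_⟩
        refine (congrArg (fun l => (g, h) ∈ l) (SimpleGraph.Walk.support_map (colorHom G H c) Wg)).mpr ?_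
        refine List.mem_map.mpr ⟨g, hmem, ?_⟩
        rw [colorHom_apply, hcg]
  have hle : tollNumber (lexProd G H) ≤ (SG ×ˢ T).ncard :=
    Nat.sInf_le ⟨SG ×ˢ T, hSGfin.prod hTfin, rfl, hprod⟩
  have hcard : (SG ×ˢ T).ncard = SG.ncard * T.ncard := by
    rw [← Nat.card_coe_set_eq, ← Nat.card_coe_set_eq, ← Nat.card_coe_set_eq,
      ← Nat.card_prod]
    exact Nat.card_congr (Equiv.Set.prod SG T)
  rw [hcard, hSGcard, hTcard, heq] at hle
  have hmul : tollNumber G * tollNumber H ≤ tollNumber G * 2 :=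
    Nat.mul_le_mul_left _ hcon
  omega
end
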